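/- Let B, C, D > 0 and let s₁, s₂, s₃ be real numbers with 0 < s₂ ≤ s₁ < 2 < s₃. Define h : (0,∞) → ℝ by h(t) := −B·s₁·(s₁−2) − C·s₂·(s₂−2)·t^(s₂−s₁) − D·s₃·(s₃−2)·t^(s₃−s₁). Then h is strictly decreasing on (0,∞) and there is exactly one t > 0 with h(t) = 0. -/
import Mathlib


/-- Let `B, C, D > 0` and `0 < s₂ ≤ s₁ < 2 < s₃`. The function
`h(t) = -B s₁ (s₁-2) - C s₂ (s₂-2) t^(s₂-s₁) - D s₃ (s₃-2) t^(s₃-s₁)` is strictly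
decreasing on `(0,∞)` and has exactly one positive root. -/
theorem strictAntiOn_and_unique_root
    (B C D s₁ s₂ s₃ : ℝ) (hB : 0 < B) (hC : 0 < C) (hD : 0 < D)
    (hs₂ : 0 < s₂) (hs₂₁ : s₂ ≤ s₁) (hs₁ : s₁ < 2) (hs₃ : 2 < s₃) :
    StrictAntiOn
      (fun t : ℝ =>
        -(B * s₁ * (s₁ - 2)) - C * s₂ * (s₂ - 2) * t ^ (s₂ - s₁)
          - D * s₃ * (s₃ - 2) * t ^ (s₃ - s₁)) (Set.Ioi 0) ∧
    ∃! t : ℝ, 0 < t ∧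
      -(B * s₁ * (s₁ - 2)) - C * s₂ * (s₂ - 2) * t ^ (s₂ - s₁)
        - D * s₃ * (s₃ - 2) * t ^ (s₃ - s₁) = 0 := by
  set f : ℝ → ℝ := fun t =>
    -(B * s₁ * (s₁ - 2)) - C * s₂ * (s₂ - 2) * t ^ (s₂ - s₁)
      - D * s₃ * (s₃ - 2) * t ^ (s₃ - s₁) with hf
  have hs₁0 : 0 < s₁ := lt_of_lt_of_le hs₂ hs₂₁
  have hA : 0 < -(B * s₁ * (s₁ - 2)) := by nlinarith [mul_pos (mul_pos hB hs₁0) (show (0:ℝ) < 2 - s₁ by linarith)]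
  have hcc : C * s₂ * (s₂ - 2) < 0 := by nlinarith [mul_pos (mul_pos hC hs₂) (show (0:ℝ) < 2 - s₂ by linarith)]
  have hd : 0 < D * s₃ * (s₃ - 2) := by nlinarith [mul_pos (mul_pos hD (show (0:ℝ) < s₃ by linarith)) (show (0:ℝ) < s₃ - 2 by linarith)]
  have ha : s₂ - s₁ ≤ 0 := by linarith
  have hb : (0:ℝ) < s₃ - s₁ := by linarith
  set A := -(B * s₁ * (s₁ - 2))
  set c := -(C * s₂ * (s₂ - 2)) with hc_def
  have hc : 0 < c := by simp [hc_def]; linarith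
  set d := D * s₃ * (s₃ - 2)
  -- strict antitonicity
  have hanti : StrictAntiOn f (Set.Ioi 0) := by
    intro x hx y hy hxy
    simp only [Set.mem_Ioi] at hx hy
    have h1 : y ^ (s₂ - s₁) ≤ x ^ (s₂ - s₁) :=
      Real.rpow_le_rpow_of_nonpos hx hxy.le ha
    have h2 : x ^ (s₃ - s₁) < y ^ (s₃ - s₁) :=
      Real.rpow_lt_rpow hx.le hxy hb
    have h3 := mul_le_mul_of_nonpos_left h1 hcc.le
    have h4 := mul_lt_mul_of_pos_left h2 hd
    simp only [hf]
    linarith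
  refine ⟨hanti, ?_⟩
  -- choose endpoints
  set t₀ : ℝ := min 1 ((A / d) ^ (s₃ - s₁)⁻¹) with ht₀def
  set t₁ : ℝ := max 1 (((A + c + 1) / d) ^ (s₃ - s₁)⁻¹) with ht₁def
  have hAd : 0 < A / d := div_pos hA hd
  have ht₀ : 0 < t₀ := lt_min one_pos (Real.rpow_pos_of_pos hAd _)
  have ht₀1 : t₀ ≤ 1 := min_le_left _ _
  have ht₁1 : (1:ℝ) ≤ t₁ := le_max_left _ _
  have ht₀₁ : t₀ ≤ t₁ := ht₀1.trans ht₁1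
  have hft₀ : 0 < f t₀ := by
    have h1 : t₀ ^ (s₃ - s₁) ≤ A / d := by
      calc t₀ ^ (s₃ - s₁) ≤ ((A / d) ^ (s₃ - s₁)⁻¹) ^ (s₃ - s₁) :=
            Real.rpow_le_rpow ht₀.le (min_le_right _ _) hb.le
        _ = A / d := Real.rpow_inv_rpow hAd.le hb.ne'
    have h2 : d * t₀ ^ (s₃ - s₁) ≤ A := by
      rw [← le_div_iff₀' hd]; exact h1
    have h3 : 0 < c * t₀ ^ (s₂ - s₁) := mul_pos hc (Real.rpow_pos_of_pos ht₀ _)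
    simp only [hf]
    have : -(C * s₂ * (s₂ - 2)) * t₀ ^ (s₂ - s₁) = c * t₀ ^ (s₂ - s₁) := by
      rw [hc_def]
    nlinarith [this]
  have hft₁ : f t₁ < 0 := by
    have hnum : (0:ℝ) ≤ (A + c + 1) / d := by positivity
    have h1 : (A + c + 1) / d ≤ t₁ ^ (s₃ - s₁) := by
      calc (A + c + 1) / d = (((A + c + 1) / d) ^ (s₃ - s₁)⁻¹) ^ (s₃ - s₁) :=
            (Real.rpow_inv_rpow hnum hb.ne').symm
        _ ≤ t₁ ^ (s₃ - s₁) :=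
            Real.rpow_le_rpow (Real.rpow_nonneg hnum _) (le_max_right _ _) hb.le
    have h2 : A + c + 1 ≤ d * t₁ ^ (s₃ - s₁) := by
      rw [← div_le_iff₀' hd]; exact h1
    have h3 : t₁ ^ (s₂ - s₁) ≤ 1 := Real.rpow_le_one_of_one_le_of_nonpos ht₁1 ha
    have h4 : c * t₁ ^ (s₂ - s₁) ≤ c := by nlinarith
    simp only [hf]
    have h5 : -(C * s₂ * (s₂ - 2)) * t₁ ^ (s₂ - s₁) = c * t₁ ^ (s₂ - s₁) := by
      rw [hc_def]
    nlinarith [h5]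
  -- continuity on [t₀, t₁]
  have hsub : Set.Icc t₀ t₁ ⊆ Set.Ioi 0 := fun x hx => lt_of_lt_of_le ht₀ hx.1
  have hcont : ContinuousOn f (Set.Icc t₀ t₁) := by
    have hne : ∀ x ∈ Set.Icc t₀ t₁, x ≠ 0 ∨ (0:ℝ) ≤ (0:ℝ) := fun x hx =>
      Or.inl (ne_of_gt (hsub hx))
    apply ContinuousOn.sub
    apply ContinuousOn.sub continuousOn_const
    · exact continuousOn_const.mul (ContinuousOn.rpow_const continuousOn_id
        fun x hx => Or.inl (ne_of_gt (hsub hx)))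
    · exact continuousOn_const.mul (ContinuousOn.rpow_const continuousOn_id
        fun x hx => Or.inl (ne_of_gt (hsub hx)))
  have hmem : (0:ℝ) ∈ Set.Icc (f t₁) (f t₀) := ⟨hft₁.le, hft₀.le⟩
  obtain ⟨t, htmem, htroot⟩ := intermediate_value_Icc' ht₀₁ hcont hmem
  have htpos : 0 < t := hsub htmem
  refine ⟨t, ⟨htpos, htroot⟩, ?_⟩
  rintro y ⟨hy, hyroot⟩
  exact hanti.injOn hy htpos (by show f y = f t; rw [htroot]; exact hyroot)
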